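/- Let G = (V,E) be a finite simple graph on n vertices, let V' ⊆ V be partitioned as V' = A' ⊎ D', let δ_in ∈ (0,1] and δ_out = δ_in^5/10^8. Suppose μ(G[A']) ≥ δ_in·n/2. Then for every matching M in G[V']: if |M[A']| < 3·δ_out·n and μ(G[A' \ V(M)]) < 16·δ_out·n, then |M[A',D']| ≥ δ_in·n/3. -/

import Mathlib

attribute [local instance] Classical.propDecidable

/-- A matching in a simple graph `G`, represented as a finite set of edges of `G`
no two of which share an endpoint. -/
def IsMatching {V : Type*} (G : SimpleGraph V) (M : Finset (Sym2 V)) : Prop :=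
  (∀ e ∈ M, e ∈ G.edgeSet) ∧
  ∀ e ∈ M, ∀ f ∈ M, e ≠ f → ∀ v : V, v ∈ e → v ∉ f

/-- The set `V(M)` of vertices matched by `M`. -/
def matchedVerts {V : Type*} (M : Finset (Sym2 V)) : Set V := {v | ∃ e ∈ M, v ∈ e}

/-- `nuOn G S` is `μ(G[S])`: the maximum size of a matching of `G` all of whose
edges have both endpoints in `S`. -/
noncomputable def nuOn {V : Type*} (G : SimpleGraph V) (S : Set V) : ℕ :=
  sSup {k | ∃ M : Finset (Sym2 V), IsMatching G M ∧ (∀ e ∈ M, ∀ v ∈ e, v ∈ S) ∧ M.card = k}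

lemma nuOn_bddAbove {V : Type*} [Fintype V] (G : SimpleGraph V) (S : Set V) :
    BddAbove {k | ∃ M : Finset (Sym2 V), IsMatching G M ∧ (∀ e ∈ M, ∀ v ∈ e, v ∈ S) ∧ M.card = k} := by
  refine ⟨Fintype.card (Sym2 V), ?_⟩
  rintro k ⟨M, -, -, rfl⟩
  exact Finset.card_le_univ M

lemma nuOn_achieved {V : Type*} [Fintype V] (G : SimpleGraph V) (S : Set V) :
    ∃ N : Finset (Sym2 V), IsMatching G N ∧ (∀ e ∈ N, ∀ v ∈ e, v ∈ S) ∧ N.card = nuOn G S := by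
  have h0 : (0:ℕ) ∈ {k | ∃ M : Finset (Sym2 V), IsMatching G M ∧ (∀ e ∈ M, ∀ v ∈ e, v ∈ S) ∧ M.card = k} :=
    ⟨∅, ⟨fun e he => absurd he (Finset.notMem_empty e),
         fun e he => absurd he (Finset.notMem_empty e)⟩,
      fun e he => absurd he (Finset.notMem_empty e), Finset.card_empty⟩
  exact Nat.sSup_mem ⟨0, h0⟩ (nuOn_bddAbove G S)

lemma le_nuOn {V : Type*} [Fintype V] (G : SimpleGraph V) (S : Set V)
    (N : Finset (Sym2 V)) (h1 : IsMatching G N) (h2 : ∀ e ∈ N, ∀ v ∈ e, v ∈ S) :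
    N.card ≤ nuOn G S :=
  le_csSup (nuOn_bddAbove G S) ⟨N, h1, h2, rfl⟩

theorem stmt_0 {V : Type*} [Fintype V] (G : SimpleGraph V) (n : ℕ)
    (hn : Fintype.card V = n)
    (V' A' D' : Set V) (hpart : A' ∪ D' = V') (hdisj : Disjoint A' D')
    (δin : ℝ) (hδ0 : 0 < δin) (hδ1 : δin ≤ 1)
    (δout : ℝ) (hδout : δout = δin ^ 5 / 10 ^ 8)
    (hμ : (nuOn G A' : ℝ) ≥ δin * n / 2)
    (M : Finset (Sym2 V)) (hM : IsMatching G M)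
    (hMV' : ∀ e ∈ M, ∀ v ∈ e, v ∈ V')
    (h1 : ((M.filter fun e => ∀ v ∈ e, v ∈ A').card : ℝ) < 3 * δout * n)
    (h2 : (nuOn G (A' \ matchedVerts M) : ℝ) < 16 * δout * n) :
    ((M.filter fun e => ∃ a ∈ A', ∃ d ∈ D', e = s(a, d)).card : ℝ) ≥ δin * n / 3 := by
  classical
  -- dispose of the degenerate case n = 0
  rcases Nat.eq_zero_or_pos n with hn0 | hnpos
  · exfalso
    rw [hn0] at h1
    have : (0:ℝ) ≤ ((M.filter fun e => ∀ v ∈ e, v ∈ A').card : ℝ) := Nat.cast_nonneg _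
    simp only [Nat.cast_zero, mul_zero] at h1
    linarith
  have hVne : Nonempty V := by
    rw [← Fintype.card_pos_iff, hn]; exact hnpos
  set MA := M.filter (fun e => ∀ v ∈ e, v ∈ A') with hMAdef
  set Mmix := M.filter (fun e => ∃ a ∈ A', ∃ d ∈ D', e = s(a, d)) with hMmixdef
  -- a maximum matching N inside A'
  obtain ⟨N, hNm, hNA, hNcard⟩ := nuOn_achieved G A'
  have hNge : (N.card : ℝ) ≥ δin * n / 2 := by rw [hNcard]; exact hμ
  set N1 := N.filter (fun e => ∀ v ∈ e, v ∉ matchedVerts M) with hN1def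
  set N2 := N.filter (fun e => ¬ ∀ v ∈ e, v ∉ matchedVerts M) with hN2def
  have hsplit : N1.card + N2.card = N.card := Finset.card_filter_add_card_filter_not _
  -- N1 is a matching in A' \ V(M)
  have hN1le : (N1.card : ℝ) < 16 * δout * n := by
    have hle : N1.card ≤ nuOn G (A' \ matchedVerts M) := by
      apply le_nuOn
      · exact ⟨fun e he => hNm.1 e (Finset.mem_of_mem_filter e he),
          fun e he f hf => hNm.2 e (Finset.mem_of_mem_filter e he) f (Finset.mem_of_mem_filter f hf)⟩
      · intro e he v hv
        have heN := Finset.mem_of_mem_filter e he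
        have := (Finset.mem_filter.mp he).2
        exact ⟨hNA e heN v hv, this v hv⟩
    calc (N1.card : ℝ) ≤ (nuOn G (A' \ matchedVerts M) : ℝ) := by exact_mod_cast hle
      _ < 16 * δout * n := h2
  -- T : matched vertices of M inside A'
  set T := Finset.univ.filter (fun v : V => v ∈ A' ∧ v ∈ matchedVerts M) with hTdef
  -- N2 injects into T
  have hN2T : N2.card ≤ T.card := by
    set f : Sym2 V → V := fun e =>
      if h : ∃ v ∈ e, v ∈ matchedVerts M then h.choose else Classical.arbitrary V with hfdef
    have hf : ∀ e ∈ N2, f e ∈ e ∧ f e ∈ matchedVerts M := by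
      intro e he
      have hcond : ¬ ∀ v ∈ e, v ∉ matchedVerts M := (Finset.mem_filter.mp he).2
      push_neg at hcond
      have h : ∃ v ∈ e, v ∈ matchedVerts M := hcond
      simp only [hfdef, dif_pos h]
      exact h.choose_spec
    apply Finset.card_le_card_of_injOn f
    · intro e he
      have heN := Finset.mem_of_mem_filter e he
      obtain ⟨h1', h2'⟩ := hf e he
      simp only [hTdef, Finset.mem_filter, Finset.mem_univ, true_and]
      exact Finset.mem_filter.mpr ⟨Finset.mem_univ _, hNA e heN _ h1', h2'⟩
    · intro e₁ he₁ e₂ he₂ heq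
      by_contra hne
      exact hNm.2 e₁ (Finset.mem_of_mem_filter e₁ he₁) e₂ (Finset.mem_of_mem_filter e₂ he₂)
        hne (f e₁) (hf e₁ he₁).1 (heq ▸ (hf e₂ he₂).1)
  -- T is covered by edges of M: |T| ≤ 2|MA| + |Mmix|
  have hTle : T.card ≤ 2 * MA.card + Mmix.card := by
    set g : V → Sym2 V := fun v =>
      if h : ∃ e ∈ M, v ∈ e then h.choose else s(v, v) with hgdef
    have hg : ∀ v ∈ matchedVerts M, g v ∈ M ∧ v ∈ g v := by
      intro v hv
      have h : ∃ e ∈ M, v ∈ e := hv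
      simp only [hgdef, dif_pos h]
      exact h.choose_spec
    have hmaps : ∀ v ∈ T, g v ∈ M := by
      intro v hv
      exact (hg v ((Finset.mem_filter.mp hv).2.2)).1
    have hfib := Finset.card_eq_sum_card_fiberwise hmaps
    rw [hfib]
    have hsub : MA ∪ Mmix ⊆ M := by
      apply Finset.union_subset <;> exact Finset.filter_subset _ _
    have hzero : ∀ e ∈ M, e ∉ MA ∪ Mmix → (T.filter (fun v => g v = e)).card = 0 := by
      intro e heM hnot
      rw [Finset.card_eq_zero]
      by_contra hne
      obtain ⟨v, hv⟩ := Finset.nonempty_iff_ne_empty.mpr hne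
      have hvT := (Finset.mem_filter.mp hv).1
      have hge := (Finset.mem_filter.mp hv).2
      obtain ⟨hvA, hvM⟩ := (Finset.mem_filter.mp hvT).2
      have hve : v ∈ e := hge ▸ (hg v hvM).2
      apply hnot
      obtain ⟨⟨a, b⟩, rfl⟩ := e.exists_rep
      have hab : v = a ∨ v = b := Sym2.mem_iff.mp hve
      -- the other endpoint
      rcases hab with rfl | rfl
      · have hbV' : b ∈ V' := hMV' _ heM b (Sym2.mem_mk_right _ _)
        rw [← hpart] at hbV'
        rcases hbV' with hbA | hbD
        · apply Finset.mem_union_left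
          simp only [hMAdef, Finset.mem_filter]
          refine ⟨heM, fun w hw => ?_⟩
          rcases Sym2.mem_iff.mp hw with rfl | rfl
          exacts [hvA, hbA]
        · apply Finset.mem_union_right
          simp only [hMmixdef, Finset.mem_filter]
          exact ⟨heM, v, hvA, b, hbD, rfl⟩
      · have haV' : a ∈ V' := hMV' _ heM a (Sym2.mem_mk_left _ _)
        rw [← hpart] at haV'
        rcases haV' with haA | haD
        · apply Finset.mem_union_left
          simp only [hMAdef, Finset.mem_filter]
          refine ⟨heM, fun w hw => ?_⟩
          rcases Sym2.mem_iff.mp hw with rfl | rfl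
          exacts [haA, hvA]
        · apply Finset.mem_union_right
          simp only [hMmixdef, Finset.mem_filter]
          exact ⟨heM, v, hvA, a, haD, Sym2.eq_swap⟩
    have hstep : ∑ e ∈ M, (T.filter (fun v => g v = e)).card
        = ∑ e ∈ MA ∪ Mmix, (T.filter (fun v => g v = e)).card := by
      symm
      apply Finset.sum_subset hsub
      intro e heM hnot
      exact hzero e heM hnot
    rw [hstep]
    have hdisjM : Disjoint MA Mmix := by
      rw [Finset.disjoint_left]
      intro e heA hemix
      obtain ⟨-, a, haA, d, hdD, rfl⟩ := Finset.mem_filter.mp hemix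
      have hall := (Finset.mem_filter.mp heA).2
      have : d ∈ A' := hall d (Sym2.mem_mk_right _ _)
      exact Set.disjoint_left.mp hdisj this hdD
    rw [Finset.sum_union hdisjM]
    have hA2 : ∑ e ∈ MA, (T.filter (fun v => g v = e)).card ≤ 2 * MA.card := by
      calc ∑ e ∈ MA, (T.filter (fun v => g v = e)).card ≤ ∑ _e ∈ MA, 2 := by
            apply Finset.sum_le_sum
            intro e he
            obtain ⟨⟨a, b⟩, rfl⟩ := e.exists_rep
            have : T.filter (fun v => g v = Quot.mk _ (a, b)) ⊆ {a, b} := by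
              intro v hv
              have hge := (Finset.mem_filter.mp hv).2
              have hvM := (Finset.mem_filter.mp ((Finset.mem_filter.mp hv).1)).2.2
              have hve : v ∈ Quot.mk _ (a, b) := hge ▸ (hg v hvM).2
              rcases Sym2.mem_iff.mp hve with rfl | rfl
              · exact Finset.mem_insert_self _ _
              · exact Finset.mem_insert_of_mem (Finset.mem_singleton_self _)
            calc (T.filter (fun v => g v = Quot.mk _ (a, b))).card ≤ ({a, b} : Finset V).card :=
                  Finset.card_le_card this
              _ ≤ 2 := (Finset.card_insert_le a {b}).trans (by simp)
        _ = 2 * MA.card := by rw [Finset.sum_const, smul_eq_mul, mul_comm]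
    have hmix1 : ∑ e ∈ Mmix, (T.filter (fun v => g v = e)).card ≤ Mmix.card := by
      calc ∑ e ∈ Mmix, (T.filter (fun v => g v = e)).card ≤ ∑ _e ∈ Mmix, 1 := by
            apply Finset.sum_le_sum
            intro e he
            obtain ⟨-, a, haA, d, hdD, rfl⟩ := Finset.mem_filter.mp he
            have : T.filter (fun v => g v = s(a, d)) ⊆ {a} := by
              intro v hv
              have hge := (Finset.mem_filter.mp hv).2
              obtain ⟨hvA, hvM⟩ := (Finset.mem_filter.mp ((Finset.mem_filter.mp hv).1)).2
              have hve : v ∈ s(a, d) := hge ▸ (hg v hvM).2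
              rcases Sym2.mem_iff.mp hve with rfl | rfl
              · exact Finset.mem_singleton_self _
              · exact absurd hdD (Set.disjoint_left.mp hdisj hvA)
            calc (T.filter (fun v => g v = s(a, d))).card ≤ ({a} : Finset V).card :=
                  Finset.card_le_card this
              _ = 1 := Finset.card_singleton a
        _ = Mmix.card := by rw [Finset.sum_const, smul_eq_mul, mul_one]
    omega
  -- now the arithmetic
  have hN2R : (N2.card : ℝ) ≤ 2 * (MA.card : ℝ) + (Mmix.card : ℝ) := by
    have : (N2.card : ℝ) ≤ (T.card : ℝ) := by exact_mod_cast hN2T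
    have h' : (T.card : ℝ) ≤ 2 * (MA.card : ℝ) + (Mmix.card : ℝ) := by exact_mod_cast hTle
    linarith
  have hsumR : (N1.card : ℝ) + (N2.card : ℝ) = (N.card : ℝ) := by exact_mod_cast hsplit
  have hpow : δin ^ 5 ≤ δin ^ 1 :=
    pow_le_pow_of_le_one hδ0.le hδ1 (by norm_num)
  have hnn : (0:ℝ) ≤ (n:ℝ) := Nat.cast_nonneg n
  have hprod : δin ^ 5 * n ≤ δin * n := by
    have := mul_le_mul_of_nonneg_right hpow hnn
    simpa using this
  have hδn : (0:ℝ) ≤ δin * n := mul_nonneg hδ0.le hnn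
  subst hδout
  show ((Mmix.card : ℕ) : ℝ) ≥ δin * n / 3
  nlinarith [hN1le, hN2R, hsumR, hNge, h1, hprod, hδn]
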